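/- (Vanishing of the anomalous pair kernel for the black hole transformation.) Fix M > 0 and let f₁, f₂ : ℝ → ℂ be Schwartz functions with f̂₁(k) = f̂₂(k) = 0 for all k ≤ 0. Then ∬_{ℝ²} f₁(y)·f₂(y')·log[ (e^{−My'}−e^{−My})/(y−y') ] dy dy' = 0. -/

import Mathlib

open MeasureTheory

/-- Fourier transform convention: `ft g k = (1/√(2π)) ∫ g t e^{-ikt} dt`. -/
noncomputable def ft (g : ℝ → ℂ) (k : ℝ) : ℂ :=
  (1 / Real.sqrt (2 * Real.pi)) * ∫ t : ℝ, g t * Complex.exp (-(Complex.I * k * t))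

open FourierTransform Real Complex SchwartzMap

lemma ft_int {g : ℝ → ℂ} {k : ℝ} (h : ft g k = 0) :
    ∫ t : ℝ, g t * Complex.exp (-(Complex.I * (k:ℂ) * t)) = 0 := by
  have h2 : (1 / (Real.sqrt (2 * Real.pi)) : ℂ) ≠ 0 := by
    simp only [ne_eq, one_div, inv_eq_zero, Complex.ofReal_eq_zero]
    positivity
  rcases mul_eq_zero.1 h with h' | h'
  · exact absurd h' h2
  · exact h'

lemma fourier_nonpos_zero (f : ℝ → ℂ) (hfreq : ∀ k ≤ (0:ℝ), ft f k = 0)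
    {ξ : ℝ} (hξ : ξ ≤ 0) : 𝓕 f ξ = 0 := by
  have h1 : ∫ t : ℝ, f t * Complex.exp (-(Complex.I * ((2 * Real.pi * ξ : ℝ) : ℂ) * t)) = 0 :=
    ft_int (hfreq _ (by nlinarith [Real.pi_pos]))
  have h2 : ∀ v : ℝ, (Real.fourierChar (-(v * ξ)) : Circle) • f v
      = f v * Complex.exp (-(Complex.I * ((2 * Real.pi * ξ : ℝ) : ℂ) * v)) := by
    intro v
    have e : ((2 * Real.pi * (-(v * ξ)) : ℝ) : ℂ) * Complex.I
        = -(Complex.I * ((2 * Real.pi * ξ : ℝ) : ℂ) * v) := by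
      push_cast; ring
    rw [Circle.smul_def, Real.fourierChar_apply, e, smul_eq_mul, mul_comm]
  rw [Real.fourier_real_eq]
  simp_rw [h2]
  exact h1

lemma mult_formula {φ ψ : ℝ → ℂ} (hφ : Integrable φ) (hψ : Integrable ψ) :
    ∫ ξ : ℝ, 𝓕 φ ξ * ψ ξ = ∫ x : ℝ, φ x * 𝓕 ψ x := by
  have h := VectorFourier.integral_fourierIntegral_smul_eq_flip (L := innerₗ ℝ)
    (μ := (volume : Measure ℝ)) (ν := (volume : Measure ℝ))
    Real.continuous_fourierChar (by exact continuous_inner) hφ hψ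
  rw [flip_innerₗ] at h
  simp [smul_eq_mul] at h
  exact h

lemma key_corr (f₁ f₂ : SchwartzMap ℝ ℂ)
    (hfreq₁ : ∀ k ≤ (0:ℝ), ft (⇑f₁) k = 0)
    (hfreq₂ : ∀ k ≤ (0:ℝ), ft (⇑f₂) k = 0) (u : ℝ) :
    ∫ t : ℝ, f₁ (u + t) * f₂ t = 0 := by
  classical
  set h : SchwartzMap ℝ ℂ := (FourierTransform.fourierCLE ℝ (SchwartzMap ℝ ℂ)).symm f₂ with hh
  have hFh : 𝓕 (⇑h) = ⇑f₂ := by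
    have : (FourierTransform.fourierCLE ℝ (SchwartzMap ℝ ℂ)) h = f₂ := by
      simp [hh]
    rw [← SchwartzMap.fourier_coe, ← FourierTransform.fourierCLE_apply (R := ℝ) h, this]
  have hint : Integrable (fun t : ℝ => f₁ (t + u)) volume :=
    ((measurePreserving_add_right volume u).integrable_comp
      f₁.continuous.aestronglyMeasurable).2 f₁.integrable
  have step1 : ∫ t : ℝ, f₁ (u + t) * f₂ t = ∫ t : ℝ, f₁ (t + u) * 𝓕 (⇑h) t := by
    rw [hFh]; simp_rw [add_comm u]
  rw [step1, ← mult_formula hint h.integrable]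
  have hcomp : 𝓕 (fun t : ℝ => f₁ (t + u)) =
      fun ξ => (Real.fourierChar ((innerₗ ℝ) u ξ) : Circle) • 𝓕 (⇑f₁) ξ := by
    exact VectorFourier.fourierIntegral_comp_add_right Real.fourierChar volume (innerₗ ℝ) (⇑f₁) u
  rw [hcomp]
  have hz : ∀ ξ : ℝ, ((Real.fourierChar ((innerₗ ℝ) u ξ) : Circle) • 𝓕 (⇑f₁) ξ) * h ξ = 0 := by
    intro ξ
    rcases le_or_gt ξ 0 with hξ | hξ
    · rw [fourier_nonpos_zero (⇑f₁) hfreq₁ hξ]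
      simp
    · have : h ξ = 0 := by
        have h2 : (⇑h : ℝ → ℂ) = 𝓕⁻ (⇑f₂) := by
          simp [hh, SchwartzMap.fourierInv_coe]
        rw [h2, Real.fourierInv_eq_fourier_neg]
        exact fourier_nonpos_zero (⇑f₂) hfreq₂ (by linarith)
      rw [this, mul_zero]
  simp_rw [hz]
  exact integral_zero ℝ ℂ

noncomputable def glog (M : ℝ) (u : ℝ) : ℝ := Real.log ((1 - Real.exp (-(M * u))) / u)

lemma glog_ratio_bounds {M : ℝ} (hM : 0 < M) {u : ℝ} (hu : u ≠ 0) :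
    M * Real.exp (-(M * |u|)) ≤ (1 - Real.exp (-(M * u))) / u ∧
      (1 - Real.exp (-(M * u))) / u ≤ M * Real.exp (M * |u|) := by
  rcases lt_or_gt_of_ne hu with h | h
  · rw [abs_of_neg h]
    have h1 := Real.add_one_le_exp (M * (-u))
    have h2 := Real.add_one_le_exp (-(M * (-u)))
    have e1 : Real.exp (-(M * u)) = Real.exp (M * (-u)) := by ring_nf
    have hp := Real.exp_pos (M * (-u))
    have hp2 := Real.exp_pos (-(M * (-u)))
    have hep : Real.exp (M * (-u)) * Real.exp (-(M * (-u))) = 1 := by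
      rw [← Real.exp_add]; simp
    constructor
    · rw [le_div_iff_of_neg h, e1]
      nlinarith
    · rw [div_le_iff_of_neg h, e1]
      nlinarith
  · rw [abs_of_pos h]
    have h1 := Real.add_one_le_exp (M * u)
    have h2 := Real.add_one_le_exp (-(M * u))
    have hp := Real.exp_pos (M * u)
    have hp2 := Real.exp_pos (-(M * u))
    have hep : Real.exp (M * u) * Real.exp (-(M * u)) = 1 := by
      rw [← Real.exp_add]; simp
    constructor
    · rw [le_div_iff₀ h]
      nlinarith
    · rw [div_le_iff₀ h]
      nlinarith

lemma glog_pos {M : ℝ} (hM : 0 < M) {u : ℝ} (hu : u ≠ 0) :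
    0 < (1 - Real.exp (-(M * u))) / u := by
  have h1 : (0:ℝ) < M * Real.exp (-(M * |u|)) := by positivity
  linarith [(glog_ratio_bounds hM hu).1]

lemma glog_abs_le {M : ℝ} (hM : 0 < M) (u : ℝ) :
    |glog M u| ≤ |Real.log M| + M * |u| := by
  rcases eq_or_ne u 0 with rfl | hu
  · simp [glog]
  · obtain ⟨hl, hr⟩ := glog_ratio_bounds hM hu
    simp only [glog]
    have hpos : 0 < M * Real.exp (-(M * |u|)) := by positivity
    have hlog1 : Real.log ((1 - Real.exp (-(M * u))) / u) ≤ Real.log M + M * |u| := by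
      have := Real.log_le_log (glog_pos hM hu) hr
      rwa [Real.log_mul (ne_of_gt hM) (Real.exp_ne_zero _), Real.log_exp] at this
    have hlog2 : Real.log M - M * |u| ≤ Real.log ((1 - Real.exp (-(M * u))) / u) := by
      have := Real.log_le_log hpos hl
      rwa [Real.log_mul (ne_of_gt hM) (Real.exp_ne_zero _), Real.log_exp] at this
    rw [abs_le]
    constructor
    · nlinarith [neg_abs_le (Real.log M), le_abs_self (Real.log M)]
    · nlinarith [le_abs_self (Real.log M)]

lemma log_split {M : ℝ} (hM : 0 < M) {y y' : ℝ} (h : y ≠ y') :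
    Real.log ((Real.exp (-(M * y')) - Real.exp (-(M * y))) / (y - y'))
      = -(M * y') + glog M (y - y') := by
  have hu : y - y' ≠ 0 := sub_ne_zero.2 h
  have e1 : Real.exp (-(M * y)) = Real.exp (-(M * y')) * Real.exp (-(M * (y - y'))) := by
    rw [← Real.exp_add]; ring_nf
  have e2 : (Real.exp (-(M * y')) - Real.exp (-(M * y))) / (y - y')
      = Real.exp (-(M * y')) * ((1 - Real.exp (-(M * (y - y')))) / (y - y')) := by
    rw [e1, ← mul_one_sub, mul_div_assoc]
  rw [e2, Real.log_mul (Real.exp_ne_zero _) (ne_of_gt (glog_pos hM hu)), Real.log_exp, glog]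

/-- Shear `(u, y) ↦ (u + y, y)` as a measurable equivalence. -/
def shearE : (ℝ × ℝ) ≃ᵐ (ℝ × ℝ) where
  toEquiv :=
    { toFun := fun z => (z.1 + z.2, z.2)
      invFun := fun z => (z.1 - z.2, z.2)
      left_inv := fun z => by simp
      right_inv := fun z => by simp }
  measurable_toFun := (measurable_fst.add measurable_snd).prodMk measurable_snd
  measurable_invFun := (measurable_fst.sub measurable_snd).prodMk measurable_snd

theorem stmt15 (M : ℝ) (hM : 0 < M) (f₁ f₂ : SchwartzMap ℝ ℂ)
    (hfreq₁ : ∀ k ≤ (0:ℝ), ft (⇑f₁) k = 0)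
    (hfreq₂ : ∀ k ≤ (0:ℝ), ft (⇑f₂) k = 0) :
    ∫ p : ℝ × ℝ, f₁ p.1 * f₂ p.2 *
        (Real.log ((Real.exp (-(M * p.2)) - Real.exp (-(M * p.1))) / (p.1 - p.2)) : ℂ)
      = 0 := by
  have hvol : (volume : Measure (ℝ × ℝ)) = (volume : Measure ℝ).prod volume :=
    MeasureTheory.Measure.volume_eq_prod ℝ ℝ
  set A : ℝ × ℝ → ℂ := fun p => f₁ p.1 * (f₂ p.2 * (-(M:ℂ) * p.2)) with hA
  set B : ℝ × ℝ → ℂ := fun p => f₁ p.1 * f₂ p.2 * ((glog M (p.1 - p.2) : ℝ) : ℂ) with hB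
  -- basic integrability facts
  have hf1n : Integrable (fun x : ℝ => ‖f₁ x‖) volume := f₁.integrable.norm
  have hf2n : Integrable (fun x : ℝ => ‖f₂ x‖) volume := f₂.integrable.norm
  have hxf1 : Integrable (fun x : ℝ => ‖x‖ * ‖f₁ x‖) volume := by
    simpa using f₁.integrable_pow_mul (volume) 1
  have hxf2 : Integrable (fun x : ℝ => ‖x‖ * ‖f₂ x‖) volume := by
    simpa using f₂.integrable_pow_mul (volume) 1
  -- integrability of A
  have hψ : Integrable (fun y' : ℝ => f₂ y' * (-(M:ℂ) * (y' : ℂ))) volume := by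
    refine Integrable.mono' (hxf2.const_mul M)
      ((f₂.continuous.mul (continuous_const.mul Complex.continuous_ofReal)).aestronglyMeasurable)
      (Filter.Eventually.of_forall fun y' => ?_)
    rw [norm_mul, norm_mul, norm_neg]
    simp only [Complex.norm_real, Real.norm_eq_abs]
    rw [abs_of_pos hM]
    nlinarith [abs_nonneg y', norm_nonneg (f₂ y')]
  have hAi : Integrable A volume := by
    rw [hvol]
    exact f₁.integrable.mul_prod hψ
  -- ∫ A = 0
  have hif1 : ∫ t : ℝ, (f₁ t : ℂ) = 0 := by
    have := ft_int (hfreq₁ 0 le_rfl)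
    simpa using this
  have hA0 : ∫ p : ℝ × ℝ, A p = 0 := by
    rw [hvol, hA]
    rw [MeasureTheory.integral_prod_mul (fun y => (f₁ y : ℂ))
      (fun y' => f₂ y' * (-(M:ℂ) * (y' : ℂ)))]
    rw [hif1, zero_mul]
  -- measurability of glog
  have hgm : Measurable (glog M) := by
    show Measurable fun u : ℝ => Real.log ((1 - Real.exp (-(M * u))) / u)
    exact Real.measurable_log.comp
      ((measurable_const.sub (Real.measurable_exp.comp (measurable_id.const_mul M).neg)).div
        measurable_id)
  have hBm : AEStronglyMeasurable B volume := by
    refine Measurable.aestronglyMeasurable ?_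
    exact ((f₁.continuous.comp continuous_fst).measurable.mul
      (f₂.continuous.comp continuous_snd).measurable).mul
      (Complex.measurable_ofReal.comp (hgm.comp (measurable_fst.sub measurable_snd)))
  -- integrability of B
  have hBi : Integrable B volume := by
    set C := |Real.log M| with hC
    have hD : Integrable (fun p : ℝ × ℝ =>
        (‖f₁ p.1‖ * ‖f₂ p.2‖) * C + M * ((‖p.1‖ * ‖f₁ p.1‖) * ‖f₂ p.2‖)
          + M * (‖f₁ p.1‖ * (‖p.2‖ * ‖f₂ p.2‖))) volume := by
      rw [hvol]
      exact (((hf1n.mul_prod hf2n).mul_const C).add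
        ((hxf1.mul_prod hf2n).const_mul M)).add ((hf1n.mul_prod hxf2).const_mul M)
    refine Integrable.mono' hD hBm (Filter.Eventually.of_forall fun p => ?_)
    rw [hB]
    simp only
    rw [norm_mul, norm_mul, Complex.norm_real]
    have hg := glog_abs_le hM (p.1 - p.2)
    have habs : |p.1 - p.2| ≤ |p.1| + |p.2| := abs_sub p.1 p.2
    rw [Real.norm_eq_abs]
    have h1 : ‖f₁ p.1‖ * ‖f₂ p.2‖ * |glog M (p.1 - p.2)|
        ≤ ‖f₁ p.1‖ * ‖f₂ p.2‖ * (C + M * (|p.1| + |p.2|)) := by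
      have hnn : (0:ℝ) ≤ ‖f₁ p.1‖ * ‖f₂ p.2‖ := by positivity
      refine mul_le_mul_of_nonneg_left ?_ hnn
      calc |glog M (p.1 - p.2)| ≤ C + M * |p.1 - p.2| := hg
        _ ≤ C + M * (|p.1| + |p.2|) := by nlinarith
    calc ‖f₁ p.1‖ * ‖f₂ p.2‖ * |glog M (p.1 - p.2)|
        ≤ ‖f₁ p.1‖ * ‖f₂ p.2‖ * (C + M * (|p.1| + |p.2|)) := h1
      _ = (‖f₁ p.1‖ * ‖f₂ p.2‖) * C + M * ((|p.1| * ‖f₁ p.1‖) * ‖f₂ p.2‖)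
          + M * (‖f₁ p.1‖ * (|p.2| * ‖f₂ p.2‖)) := by ring
      _ = (‖f₁ p.1‖ * ‖f₂ p.2‖) * C + M * ((‖p.1‖ * ‖f₁ p.1‖) * ‖f₂ p.2‖)
          + M * (‖f₁ p.1‖ * (‖p.2‖ * ‖f₂ p.2‖)) := by rw [Real.norm_eq_abs, Real.norm_eq_abs]
  -- ∫ B = 0
  have hB0 : ∫ p : ℝ × ℝ, B p = 0 := by
    have hBi' : Integrable B ((volume : Measure ℝ).prod volume) := by rwa [hvol] at hBi
    have hBm' : AEStronglyMeasurable B ((volume : Measure ℝ).prod volume) := by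
      rwa [hvol] at hBm
    have hSmp : MeasurePreserving (fun z : ℝ × ℝ => (z.1 + z.2, z.2))
        ((volume : Measure ℝ).prod volume) ((volume : Measure ℝ).prod volume) :=
      measurePreserving_add_prod _ _
    have hcomp : ∫ z : ℝ × ℝ, B (z.1 + z.2, z.2) ∂((volume : Measure ℝ).prod volume)
        = ∫ z, B z ∂((volume : Measure ℝ).prod volume) :=
      hSmp.integral_comp shearE.measurableEmbedding B
    have hBS : Integrable (fun z : ℝ × ℝ => B (z.1 + z.2, z.2))
        ((volume : Measure ℝ).prod volume) :=
      (hSmp.integrable_comp hBm').2 hBi'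
    have hiter : ∫ z : ℝ × ℝ, B (z.1 + z.2, z.2) ∂((volume : Measure ℝ).prod volume)
        = ∫ u : ℝ, ∫ y' : ℝ, B (u + y', y') := integral_prod _ hBS
    have hinner : ∀ u : ℝ, (∫ y' : ℝ, B (u + y', y')) = 0 := by
      intro u
      have : ∀ y' : ℝ, B (u + y', y') = f₁ (u + y') * f₂ y' * ((glog M u : ℝ) : ℂ) := by
        intro y'
        rw [hB]
        simp only [add_sub_cancel_right]
      simp_rw [this]
      rw [MeasureTheory.integral_mul_const]
      rw [key_corr f₁ f₂ hfreq₁ hfreq₂ u, zero_mul]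
    rw [hvol, ← hcomp, hiter]
    simp_rw [hinner]
    exact integral_zero ℝ ℂ
  -- a.e. equality
  have hdiag : volume {p : ℝ × ℝ | p.1 = p.2} = 0 := by
    have hmeas : MeasurableSet {p : ℝ × ℝ | p.1 = p.2} :=
      (isClosed_eq continuous_fst continuous_snd).measurableSet
    rw [hvol]
    rw [Measure.measure_prod_null hmeas]
    refine Filter.Eventually.of_forall fun x => ?_
    have : (Prod.mk x ⁻¹' {p : ℝ × ℝ | p.1 = p.2}) = {x} := by
      ext y; simp [eq_comm]
    simp [this]
  have hae : ∀ᵐ p : ℝ × ℝ, p.1 ≠ p.2 := by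
    have hset : {p : ℝ × ℝ | ¬ p.1 ≠ p.2} = {p : ℝ × ℝ | p.1 = p.2} := by
      ext p; simp
    rw [ae_iff, hset]
    exact hdiag
  have heq : (fun p : ℝ × ℝ => f₁ p.1 * f₂ p.2 *
        ((Real.log ((Real.exp (-(M * p.2)) - Real.exp (-(M * p.1))) / (p.1 - p.2)) : ℝ) : ℂ))
      =ᵐ[volume] fun p => A p + B p := by
    filter_upwards [hae] with p hp
    rw [log_split hM hp, hA, hB]
    push_cast
    ring
  rw [integral_congr_ae heq, integral_add hAi hBi, hA0, hB0, add_zero]
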